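/- Let G=(V,A) be a finite directed acyclic graph, let B, D, E be subsets of V, and let M and N be two d-separators between B and D given E. If N is a minimal d-separator between B and D given E and M is d-separated from D given N ∪ E, then B is d-separated from N given M ∪ E. -/

import Mathlib

/-- `IsTrail A n f` : `f 0, f 1, …, f n` is a trail in the directed graph with
arc relation `A` (each consecutive pair is joined by an arc in one direction or the other). -/
def IsTrail {V : Type*} (A : V → V → Prop) (n : ℕ) (f : ℕ → V) : Prop :=
  ∀ i < n, A (f i) (f (i+1)) ∨ A (f (i+1)) (f i)

/-- `IsVStruct A n f i` : the vertex `f i` is a v-structure of the trail `f 0, …, f n`,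
i.e. `i` is interior and both neighbouring arcs point towards `f i`. -/
def IsVStruct {V : Type*} (A : V → V → Prop) (n : ℕ) (f : ℕ → V) (i : ℕ) : Prop :=
  0 < i ∧ i < n ∧ A (f (i-1)) (f i) ∧ A (f (i+1)) (f i)

/-- `Cdsc A v = {v} ∪ dsc(v)` : `v` together with its descendants. -/
def Cdsc {V : Type*} (A : V → V → Prop) (v : V) : Set V :=
  {w | Relation.ReflTransGen A v w}

/-- `Casc A S = S ∪ asc(S)` : `S` together with its ascendants. -/
def Casc {V : Type*} (A : V → V → Prop) (S : Set V) : Set V :=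
  {u | ∃ s ∈ S, Relation.ReflTransGen A u s}

/-- The trail `f 0, …, f n` is active given `M` : every vertex of the trail that is not a
v-structure is not in `M`, and every v-structure `v` satisfies `cdsc(v) ∩ M ≠ ∅`. -/
def ActiveTrail {V : Type*} (A : V → V → Prop) (M : Set V) (n : ℕ) (f : ℕ → V) : Prop :=
  IsTrail A n f ∧
  (∀ i ≤ n, ¬ IsVStruct A n f i → f i ∉ M) ∧
  (∀ i ≤ n, IsVStruct A n f i → (Cdsc A (f i) ∩ M).Nonempty)

/-- `DSep A X Y M` : `M` d-separates `X` and `Y`, i.e. no trail between a vertex of `X`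
and a vertex of `Y` is active given `M`. -/
def DSep {V : Type*} (A : V → V → Prop) (X Y M : Set V) : Prop :=
  ∀ (n : ℕ) (f : ℕ → V), f 0 ∈ X → f n ∈ Y → ¬ ActiveTrail A M n f

/-- `Mb A B C E` : the Markov blanket of `B` in `C` given `E`, defined as
`{v ∈ C : v is not d-separated from B given E ∪ (C \ (B ∪ {v}))}`. -/
def Mb {V : Type*} (A : V → V → Prop) (B C E : Set V) : Set V :=
  {v | v ∈ C ∧ ¬ DSep A {v} B (E ∪ (C \ (B ∪ {v})))}

/-- The directed graph with arc relation `A` is acyclic. -/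
def Acyclic {V : Type*} (A : V → V → Prop) : Prop :=
  ∀ v, ¬ Relation.TransGen A v v

/-- `M` is a d-separator between `B` and `D` given the evidence set `E`. -/
def IsDSep {V : Type*} (A : V → V → Prop) (B D E M : Set V) : Prop :=
  DSep A B D (M ∪ E)

/-- `M` is a minimal d-separator between `B` and `D` given the evidence set `E`. -/
def IsMinDSep {V : Type*} (A : V → V → Prop) (B D E M : Set V) : Prop :=
  IsDSep A B D E M ∧ ∀ M' ⊂ M, ¬ IsDSep A B D E M'

namespace S19
open Classical
variable {V : Type*}

/-- Walks with direction-annotated steps. `d = true`: the arc points `u → v`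
(so traversal arrives at `v` "by the head"); `d = false`: the arc is `v → u`. -/
inductive Wk (A : V → V → Prop) : V → V → Type _ where
  | nil (u : V) : Wk A u u
  | cons {u v w : V} (d : Bool) (hd : if d then A u v else A v u) (p : Wk A v w) : Wk A u w

variable {A : V → V → Prop}

/-- Pass condition at a vertex `u`, arrived with direction `din` (none = start),
leaving by a step of direction `d`.  Non-colliders must avoid `Znc`; colliders
must have a descendant in `Zcol`. -/
def pass2 (A : V → V → Prop) (Znc Zcol : Set V) (din : Option Bool) (u : V) (d : Bool) : Prop :=
  match din, d with
  | none, _ => True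
  | some _, true => u ∉ Znc
  | some true, false => (Cdsc A u ∩ Zcol).Nonempty
  | some false, false => u ∉ Znc

def Val2 (Znc Zcol : Set V) : ∀ {u w : V}, Wk A u w → Option Bool → Prop
  | _, _, Wk.nil _, _ => True
  | u, _, Wk.cons d _ p, din => pass2 A Znc Zcol din u d ∧ Val2 Znc Zcol p (some d)

def lastd : ∀ {u w : V}, Wk A u w → Option Bool → Option Bool
  | _, _, Wk.nil _, din => din
  | _, _, Wk.cons d _ p, _ => lastd p (some d)

def headd : ∀ {u w : V}, Wk A u w → Option Bool
  | _, _, Wk.nil _ => none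
  | _, _, Wk.cons d _ _ => some d

def Wk.app : ∀ {u v w : V}, Wk A u v → Wk A v w → Wk A u w
  | _, _, _, Wk.nil _, q => q
  | _, _, _, Wk.cons d hd p, q => Wk.cons d hd (p.app q)

lemma val2_app {Znc Zcol : Set V} :
    ∀ {u v w : V} (p : Wk A u v) (q : Wk A v w) (din : Option Bool),
    Val2 Znc Zcol (p.app q) din ↔ Val2 Znc Zcol p din ∧ Val2 Znc Zcol q (lastd p din) := by
  intro u v w p q din
  induction p generalizing din with
  | nil => simp [Wk.app, Val2, lastd]
  | cons d hd p ih => simp [Wk.app, Val2, lastd, ih, and_assoc]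

lemma lastd_app : ∀ {u v w : V} (p : Wk A u v) (q : Wk A v w) (din : Option Bool),
    lastd (p.app q) din = lastd q (lastd p din) := by
  intro u v w p q din
  induction p generalizing din with
  | nil => simp [Wk.app, lastd]
  | cons d hd p ih => simp [Wk.app, lastd, ih]

lemma pass2_mono {Znc Zcol Znc' Zcol' : Set V} (h1 : Znc' ⊆ Znc) (h2 : Zcol ⊆ Zcol')
    {din : Option Bool} {u : V} {d : Bool} (hp : pass2 A Znc Zcol din u d) :
    pass2 A Znc' Zcol' din u d := by
  match din, d with
  | none, _ => trivial
  | some _, true => simp only [pass2] at hp ⊢; exact fun hx => hp (h1 hx)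
  | some true, false => simp only [pass2] at hp ⊢; exact hp.imp fun x hx => ⟨hx.1, h2 hx.2⟩
  | some false, false => simp only [pass2] at hp ⊢; exact fun hx => hp (h1 hx)

lemma val2_mono {Znc Zcol Znc' Zcol' : Set V} (h1 : Znc' ⊆ Znc) (h2 : Zcol ⊆ Zcol') :
    ∀ {u w : V} (p : Wk A u w) (din : Option Bool),
    Val2 Znc Zcol p din → Val2 Znc' Zcol' p din := by
  intro u w p
  induction p with
  | nil => intro din h; trivial
  | cons d hd p ih =>
    intro din h
    exact ⟨pass2_mono h1 h2 h.1, ih _ h.2⟩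

/-- Weakening the incoming direction to `none` (head pass becomes trivial). -/
lemma val2_none {Znc Zcol : Set V} :
    ∀ {u w : V} (p : Wk A u w) (din : Option Bool),
    Val2 Znc Zcol p din → Val2 Znc Zcol p none := by
  intro u w p din h
  cases p with
  | nil => trivial
  | cons d hd p => exact ⟨trivial, h.2⟩


/-! ### Reversal -/

def Wk.single {u v : V} (d : Bool) (hd : if d then A u v else A v u) : Wk A u v :=
  Wk.cons d hd (Wk.nil v)

def Wk.rev : ∀ {u w : V}, Wk A u w → Wk A w u
  | _, _, Wk.nil u => Wk.nil u
  | _, _, Wk.cons d hd p =>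
      p.rev.app (Wk.single (!d) (by cases d <;> simpa using hd))

lemma pass2_flip {Znc Zcol : Set V} {v : V} {a b : Bool}
    (h : pass2 A Znc Zcol (some a) v b) : pass2 A Znc Zcol (some (!b)) v (!a) := by
  cases a <;> cases b <;> simpa [pass2] using h

def flipo : Option Bool → Option Bool := Option.map (fun d => !d)

lemma lastd_rev : ∀ {u w : V} (p : Wk A u w), lastd p.rev none = flipo (headd p) := by
  intro u w p
  cases p with
  | nil => rfl
  | cons d hd p =>
    show lastd (p.rev.app _) none = some (!d)
    rw [lastd_app]
    rfl

lemma val2_rev {Znc Zcol : Set V} :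
    ∀ {u w : V} (p : Wk A u w) (din : Option Bool),
    Val2 Znc Zcol p din → Val2 Znc Zcol p.rev none := by
  intro u w p
  induction p with
  | nil => intro din h; trivial
  | cons d hd p ih =>
    intro din h
    show Val2 Znc Zcol (p.rev.app _) none
    rw [val2_app]
    refine ⟨ih _ h.2, ?_⟩
    rw [lastd_rev]
    cases p with
    | nil => exact ⟨trivial, trivial⟩
    | cons d₂ hd₂ p₂ =>
      refine ⟨?_, trivial⟩
      have hp : pass2 A Znc Zcol (some d) _ d₂ := h.2.1
      exact pass2_flip hp

/-! ### Events, splitting, strengthening -/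

def EvFree (Q : Option Bool → V → Bool → Prop) : ∀ {u w : V}, Wk A u w → Option Bool → Prop
  | _, _, Wk.nil _, _ => True
  | u, _, Wk.cons d _ p, din => ¬ Q din u d ∧ EvFree Q p (some d)

lemma split_first (Q : Option Bool → V → Bool → Prop) :
    ∀ {u w : V} (p : Wk A u w) (din : Option Bool),
    EvFree Q p din ∨
    ∃ (x y : V) (d₂ : Bool) (h₂ : if d₂ then A x y else A y x) (p₁ : Wk A u x) (p₃ : Wk A y w),
      p = p₁.app (Wk.cons d₂ h₂ p₃) ∧ EvFree Q p₁ din ∧ Q (lastd p₁ din) x d₂ := by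
  intro u w p
  induction p with
  | nil => intro din; exact Or.inl trivial
  | @cons a b w2 d hd p ih =>
    intro din
    by_cases hQ : Q din a d
    · exact Or.inr ⟨a, b, d, hd, Wk.nil a, p, rfl, trivial, hQ⟩
    · rcases ih (some d) with hfree | ⟨x, y, d₂, h₂, p₁, p₃, hp, hf, hq⟩
      · exact Or.inl ⟨hQ, hfree⟩
      · exact Or.inr ⟨x, y, d₂, h₂, Wk.cons d hd p₁, p₃, by rw [Wk.app, hp], ⟨hQ, hf⟩, hq⟩

lemma split_last (Q : Option Bool → V → Bool → Prop) :
    ∀ {u w : V} (p : Wk A u w) (din : Option Bool),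
    EvFree Q p din ∨
    ∃ (x y : V) (d₂ : Bool) (h₂ : if d₂ then A x y else A y x) (p₁ : Wk A u x) (p₃ : Wk A y w),
      p = p₁.app (Wk.cons d₂ h₂ p₃) ∧ Q (lastd p₁ din) x d₂ ∧ EvFree Q p₃ (some d₂) := by
  intro u w p
  induction p with
  | nil => intro din; exact Or.inl trivial
  | @cons a b w2 d hd p ih =>
    intro din
    rcases ih (some d) with hfree | ⟨x, y, d₂, h₂, p₁, p₃, hp, hq, hf⟩
    · by_cases hQ : Q din a d
      · exact Or.inr ⟨a, b, d, hd, Wk.nil a, p, rfl, hQ, hfree⟩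
      · exact Or.inl ⟨hQ, hfree⟩
    · exact Or.inr ⟨x, y, d₂, h₂, Wk.cons d hd p₁, p₃, by rw [Wk.app, hp], hq, hf⟩

/-- Non-collider pass predicate (vertex actually passed, not as a collider). -/
def ncPass (din : Option Bool) (d : Bool) : Prop :=
  din ≠ none ∧ ¬(din = some true ∧ d = false)

lemma val2_strengthen_nc {Znc Zcol S : Set V} :
    ∀ {u w : V} (p : Wk A u w) (din : Option Bool),
    Val2 Znc Zcol p din → EvFree (fun din' x d => ncPass din' d ∧ x ∈ S) p din →
    Val2 (Znc ∪ S) Zcol p din := by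
  intro u w p
  induction p with
  | nil => intro din h _; trivial
  | cons d hd p ih =>
    intro din h hf
    refine ⟨?_, ih _ h.2 hf.2⟩
    have hp := h.1
    have he := hf.1
    match din, d with
    | none, _ => trivial
    | some a, true =>
      simp only [pass2] at hp ⊢
      intro hx
      rcases hx with hx | hx
      · exact hp hx
      · exact he ⟨⟨by simp, by simp⟩, hx⟩
    | some true, false => simpa [pass2] using hp
    | some false, false =>
      simp only [pass2] at hp ⊢
      intro hx
      rcases hx with hx | hx
      · exact hp hx
      · exact he ⟨⟨by simp, by simp⟩, hx⟩

/-- R-collider event: a collider pass whose vertex has no descendant in `ZM`. -/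
def RcolEv (A : V → V → Prop) (ZM : Set V) (din : Option Bool) (x : V) (d : Bool) : Prop :=
  din = some true ∧ d = false ∧ ¬ (Cdsc A x ∩ ZM).Nonempty

lemma val2_strengthen_col {Znc Zcol ZM : Set V} :
    ∀ {u w : V} (p : Wk A u w) (din : Option Bool),
    Val2 Znc Zcol p din → EvFree (RcolEv A ZM) p din →
    Val2 Znc ZM p din := by
  intro u w p
  induction p with
  | nil => intro din h _; trivial
  | cons d hd p ih =>
    intro din h hf
    refine ⟨?_, ih _ h.2 hf.2⟩
    have hp := h.1
    have he := hf.1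
    match din, d with
    | none, _ => trivial
    | some a, true => simpa [pass2] using hp
    | some true, false =>
      simp only [pass2]
      by_contra hc
      exact he ⟨rfl, rfl, hc⟩
    | some false, false => simpa [pass2] using hp

open Classical in
noncomputable def Rcount (A : V → V → Prop) (ZM : Set V) : ∀ {u w : V}, Wk A u w → Option Bool → ℕ
  | _, _, Wk.nil _, _ => 0
  | u, _, Wk.cons d _ p, din =>
      (if RcolEv A ZM din u d then 1 else 0) + Rcount A ZM p (some d)

lemma rcount_app {ZM : Set V} : ∀ {u v w : V} (p : Wk A u v) (q : Wk A v w) (din : Option Bool),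
    Rcount A ZM (p.app q) din = Rcount A ZM p din + Rcount A ZM q (lastd p din) := by
  intro u v w p q din
  induction p generalizing din with
  | nil => simp [Wk.app, Rcount, lastd]
  | cons d hd p ih => simp [Wk.app, Rcount, lastd, ih, Nat.add_assoc]

lemma rcount_not_some_true {ZM : Set V} {u w : V} (p : Wk A u w) {din : Option Bool}
    (h : din ≠ some true) : Rcount A ZM p din = Rcount A ZM p none := by
  cases p with
  | nil => rfl
  | cons d hd p =>
    show _ + _ = _ + _
    congr 1
    simp only [RcolEv]
    exact (if_neg (fun hc => h hc.1)).trans (if_neg (fun hc => by cases hc.1)).symm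

lemma evfree_rcount_zero {ZM : Set V} : ∀ {u w : V} (p : Wk A u w) (din : Option Bool),
    EvFree (RcolEv A ZM) p din → Rcount A ZM p din = 0 := by
  intro u w p
  induction p with
  | nil => intro _ _; rfl
  | cons d hd p ih =>
    intro din h
    show _ + _ = 0
    rw [if_neg h.1, ih _ h.2]

/-! ### Directed walks and first hits -/

def AllT : ∀ {u w : V}, Wk A u w → Prop
  | _, _, Wk.nil _ => True
  | _, _, Wk.cons d _ p => d = true ∧ AllT p

def srcs : ∀ {u w : V}, Wk A u w → Set V
  | _, _, Wk.nil _ => ∅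
  | u, _, Wk.cons _ _ p => insert u (srcs p)

lemma val2_allT {Znc Zcol : Set V} : ∀ {u w : V} (p : Wk A u w),
    AllT p → (∀ z ∈ srcs p, z ∉ Znc) → ∀ din, Val2 Znc Zcol p din := by
  intro u w p
  induction p with
  | nil => intro _ _ _; trivial
  | cons d hd p ih =>
    intro hT hs din
    refine ⟨?_, ih hT.2 (fun z hz => hs z (Set.mem_insert_of_mem _ hz)) _⟩
    rcases hT with ⟨rfl, -⟩
    match din with
    | none => trivial
    | some a =>
      simp only [pass2]
      exact hs _ (Set.mem_insert _ _)

lemma rcount_allT {ZM : Set V} : ∀ {u w : V} (p : Wk A u w),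
    AllT p → ∀ din, Rcount A ZM p din = 0 := by
  intro u w p
  induction p with
  | nil => intro _ _; rfl
  | cons d hd p ih =>
    intro hT din
    show _ + _ = 0
    rcases hT with ⟨rfl, hT⟩
    rw [if_neg (by rintro ⟨-, h2, -⟩; cases h2), ih hT]

lemma lastd_allT_aux : ∀ {u w : V} (p : Wk A u w), AllT p →
    lastd p (some true) = some true := by
  intro u w p
  induction p with
  | nil => intro _; rfl
  | @cons a b w2 d hd p ih =>
    intro h
    rcases h with ⟨rfl, h⟩
    exact ih h

/-- last direction of a nonempty all-forward walk is `some true`. -/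
lemma lastd_allT_cons {a b w2 : V} (d : Bool) (hd : if d then A a b else A b a)
    (p : Wk A b w2) (hT : AllT (Wk.cons d hd p)) (din : Option Bool) :
    lastd (Wk.cons d hd p) din = some true := by
  rcases hT with ⟨rfl, hT⟩
  show lastd p (some true) = some true
  exact lastd_allT_aux p hT

lemma firsthit (T : Set V) {u y : V} (h : Relation.ReflTransGen A u y) (hy : y ∈ T) :
    ∃ t ∈ T, ∃ p : Wk A u t, AllT p ∧ (∀ z ∈ srcs p, z ∉ T ∧ Relation.ReflTransGen A u z) ∧
      Relation.ReflTransGen A u t := by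
  induction h using Relation.ReflTransGen.head_induction_on with
  | refl => exact ⟨y, hy, Wk.nil y, trivial, fun z hz => absurd hz (Set.notMem_empty z), .refl⟩
  | head hstep _ ih =>
    rename_i a c _
    by_cases haT : a ∈ T
    · exact ⟨a, haT, Wk.nil a, trivial, fun z hz => absurd hz (Set.notMem_empty z), .refl⟩
    · obtain ⟨t, htT, p, hT, hs, hrt⟩ := ih
      have hstep' : if (true : Bool) then A a c else A c a := by simpa using hstep
      refine ⟨t, htT, Wk.cons true hstep' p, ⟨rfl, hT⟩, ?_, .head hstep hrt⟩
      intro z hz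
      rcases hz with rfl | hz
      · exact ⟨haT, .refl⟩
      · obtain ⟨h1, h2⟩ := hs z hz
        exact ⟨h1, .head hstep h2⟩


/-! ### Acyclicity facts -/

lemma acy_irrefl (hA : Acyclic A) (v : V) : ¬ A v v := fun h => hA v (.single h)

lemma acy_antisym (hA : Acyclic A) {u v : V} (h : A u v) : ¬ A v u :=
  fun h2 => hA u (.head h (.single h2))

lemma acy_rtg_ne (hA : Acyclic A) {u z y : V} (h1 : A u z) (h2 : Relation.ReflTransGen A z y) :
    y ≠ u := by
  rintro rfl
  exact hA y (Relation.TransGen.head' h1 h2)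

/-! ### Walk → trail -/

def dinfo (A : V → V → Prop) (n : ℕ) (f : ℕ → V) : Option Bool → Prop
  | none => n = 0
  | some d => 0 < n ∧ (if d then A (f (n-1)) (f n) else A (f n) (f (n-1)))

def PreTrail (A : V → V → Prop) (Z : Set V) (n : ℕ) (f : ℕ → V) (din : Option Bool) : Prop :=
  IsTrail A n f ∧ f 0 ∉ Z ∧
  (∀ i, 0 < i → i < n →
    (IsVStruct A n f i → (Cdsc A (f i) ∩ Z).Nonempty) ∧ (¬ IsVStruct A n f i → f i ∉ Z)) ∧
  dinfo A n f din

lemma isv_congr {n m i : ℕ} {f g : ℕ → V} (h : ∀ j ≤ n, g j = f j)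
    (hi : 0 < i) (hin : i < n) (hnm : n ≤ m) : IsVStruct A m g i ↔ IsVStruct A n f i := by
  have h1 : g (i-1) = f (i-1) := h _ (le_trans (Nat.sub_le _ _) hin.le)
  have h2 : g i = f i := h _ hin.le
  have h3 : g (i+1) = f (i+1) := h _ hin
  unfold IsVStruct
  rw [h1, h2, h3]
  constructor
  · rintro ⟨-, -, hb, hc⟩; exact ⟨hi, hin, hb, hc⟩
  · rintro ⟨-, -, hb, hc⟩; exact ⟨hi, lt_of_lt_of_le hin hnm, hb, hc⟩

lemma pretrail_extend (hA : Acyclic A) {Z : Set V} {n : ℕ} {f : ℕ → V} {din : Option Bool}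
    (hp : PreTrail A Z n f din) {v : V} {d : Bool}
    (harc : if d then A (f n) v else A v (f n)) (hpass : pass2 A Z Z din (f n) d) :
    PreTrail A Z (n+1) (fun i => if i ≤ n then f i else v) (some d) := by
  obtain ⟨ht, h0, hint, hdi⟩ := hp
  set g : ℕ → V := fun i => if i ≤ n then f i else v with hg
  have hgj : ∀ j ≤ n, g j = f j := fun j hj => by simp [hg, hj]
  have hgn1 : g (n+1) = v := by simp [hg]
  have hgn : g n = f n := hgj n le_rfl
  refine ⟨?_, ?_, ?_, ?_⟩
  · -- IsTrail
    intro i hi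
    rcases Nat.lt_succ_iff_lt_or_eq.mp hi with hi' | rfl
    · rw [hgj i hi'.le, hgj (i+1) hi']
      exact ht i hi'
    · rw [hgn, hgn1]
      cases d with
      | true => exact Or.inl (by simpa using harc)
      | false => exact Or.inr (by simpa using harc)
  · rw [hgj 0 (Nat.zero_le n)]; exact h0
  · intro i hi0 hin1
    rcases Nat.lt_succ_iff_lt_or_eq.mp hin1 with hi' | rfl
    · have hcong := isv_congr (A := A) hgj hi0 hi' (Nat.le_succ n)
      rw [hgj i hi'.le, hcong]
      exact hint i hi0 hi'
    · -- the new interior vertex, old endpoint f i (here i = n after substitution)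
      cases din with
      | none =>
        have h00 : i = 0 := hdi
        omega
      | some d₀ =>
        have hdi' : 0 < i ∧ (if d₀ then A (f (i-1)) (f i) else A (f i) (f (i-1))) := hdi
        obtain ⟨-, harc0⟩ := hdi'
        have hgn1' : g (i-1) = f (i-1) := hgj _ (Nat.sub_le _ _)
        constructor
        · intro _
          -- must be the collider pattern (d₀ = true, d = false)
          cases d₀ with
          | false =>
            exfalso
            rename_i hv
            obtain ⟨-, -, hb, -⟩ := hv
            rw [hgn1', hgn] at hb
            exact acy_antisym hA (by simpa using harc0) hb
          | true =>
            cases d with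
            | true =>
              exfalso
              rename_i hv
              obtain ⟨-, -, -, hc⟩ := hv
              rw [hgn1, hgn] at hc
              exact acy_antisym hA (by simpa using harc) hc
            | false =>
              rw [hgn]
              simpa [pass2] using hpass
        · intro hnv
          cases d₀ with
          | false => rw [hgn]; cases d <;> simpa [pass2] using hpass
          | true =>
            cases d with
            | true => rw [hgn]; simpa [pass2] using hpass
            | false =>
              exfalso
              apply hnv
              refine ⟨hi0, Nat.lt_succ_self i, ?_, ?_⟩
              · rw [hgn1', hgn]; simpa using harc0
              · rw [hgn1, hgn]; simpa using harc
  · refine ⟨Nat.succ_pos n, ?_⟩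
    have : (n+1) - 1 = n := rfl
    rw [this, hgn, hgn1]
    exact harc

lemma walk_to_trail (hA : Acyclic A) (Z : Set V) :
    ∀ {u w : V} (p : Wk A u w) (n : ℕ) (f : ℕ → V) (din : Option Bool),
    PreTrail A Z n f din → f n = u → Val2 Z Z p din →
    ∃ m g, g 0 = f 0 ∧ g m = w ∧ PreTrail A Z m g (lastd p din) := by
  intro u w p
  induction p with
  | nil => intro n f din hp hf hv; exact ⟨n, f, rfl, hf, hp⟩
  | @cons a b w2 d hd p ih =>
    intro n f din hp hf hv
    have harc : if d then A (f n) b else A b (f n) := by rw [hf]; exact hd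
    have hpass : pass2 A Z Z din (f n) d := by rw [hf]; exact hv.1
    have hext := pretrail_extend hA hp harc hpass
    have hfn1 : (fun i => if i ≤ n then f i else b) (n+1) = b := by simp
    obtain ⟨m, g, hg0, hgm, hgp⟩ := ih (n+1) _ (some d) hext hfn1 hv.2
    refine ⟨m, g, ?_, hgm, hgp⟩
    rw [hg0]; simp

lemma pretrail_active {Z : Set V} {n : ℕ} {f : ℕ → V} {din : Option Bool}
    (hp : PreTrail A Z n f din) (hend : f n ∉ Z) : ActiveTrail A Z n f := by
  obtain ⟨ht, h0, hint, -⟩ := hp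
  refine ⟨ht, ?_, ?_⟩
  · intro i hi hnv
    rcases Nat.eq_zero_or_pos i with rfl | hi0
    · exact h0
    · rcases eq_or_lt_of_le hi with rfl | hi'
      · exact hend
      · exact (hint i hi0 hi').2 hnv
  · intro i hi hv
    have hi0 : 0 < i := hv.1
    have hi' : i < n := hv.2.1
    exact (hint i hi0 hi').1 hv

/-- From a valid walk to a violation of `DSep`. -/
lemma dsep_no_walk (hA : Acyclic A) {X Y Z : Set V} (hd : DSep A X Y Z) {u w : V}
    (hu : u ∈ X) (hu' : u ∉ Z) (hw : w ∈ Y) (hw' : w ∉ Z)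
    (p : Wk A u w) (hv : Val2 Z Z p none) : False := by
  have hpre : PreTrail A Z 0 (fun _ => u) none :=
    ⟨fun i hi => absurd hi (Nat.not_lt_zero i), hu', fun i hi0 hi => absurd (hi0.trans hi) (Nat.lt_irrefl 0), rfl⟩
  obtain ⟨m, g, hg0, hgm, hgp⟩ := walk_to_trail hA Z p 0 (fun _ => u) none hpre rfl hv
  have hact := pretrail_active hgp (by rwa [hgm])
  exact hd m g (by rwa [hg0]) (by rwa [hgm]) hact

/-! ### Trail → walk -/

lemma active_to_walk (hA : Acyclic A) {Z : Set V} {n : ℕ} {f : ℕ → V}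
    (hact : ActiveTrail A Z n f) :
    ∃ p : Wk A (f 0) (f n), Val2 Z Z p none ∧
      ((n = 0 ∧ lastd p none = none) ∨
       (∃ d', lastd p none = some d' ∧ 0 < n ∧
          (if d' then A (f (n-1)) (f n) else A (f n) (f (n-1))))) := by
  obtain ⟨ht, hnc, hcol⟩ := hact
  -- auxiliary downward construction
  have aux : ∀ m i din, i + m = n →
      ((i = 0 ∧ din = none) ∨
       (∃ d₀, din = some d₀ ∧ 0 < i ∧ (if d₀ then A (f (i-1)) (f i) else A (f i) (f (i-1))))) →
      ∃ p : Wk A (f i) (f n), Val2 Z Z p din ∧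
        ((n = 0 ∧ lastd p din = none) ∨
         (∃ d', lastd p din = some d' ∧ 0 < n ∧
            (if d' then A (f (n-1)) (f n) else A (f n) (f (n-1))))) := by
    intro m
    induction m with
    | zero =>
      intro i din hi hcomp
      have hin : i = n := by omega
      subst hin
      refine ⟨Wk.nil (f i), trivial, ?_⟩
      rcases hcomp with ⟨rfl, rfl⟩ | ⟨d₀, rfl, hi0, harc⟩
      · exact Or.inl ⟨rfl, rfl⟩
      · exact Or.inr ⟨d₀, rfl, hi0, harc⟩
    | succ m ihm =>
      intro i din hi hcomp
      have hin : i < n := by omega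
      have harc := ht i hin
      -- choose a direction for the arc (i, i+1)
      rcases harc with harc | harc
      · -- forward arc
        obtain ⟨p, hv, hld⟩ := ihm (i+1) (some true) (by omega)
          (Or.inr ⟨true, rfl, Nat.succ_pos i, by simpa using harc⟩)
        have harc' : if (true : Bool) then A (f i) (f (i+1)) else A (f (i+1)) (f i) := by
          simpa using harc
        refine ⟨Wk.cons true harc' p, ⟨?_, hv⟩, hld⟩
        rcases hcomp with ⟨rfl, rfl⟩ | ⟨d₀, rfl, hi0, harc0⟩
        · trivial
        · -- noncollider pass (leaving by out-arc)
          simp only [pass2]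
          apply hnc i hin.le
          intro hv2
          exact acy_antisym hA harc hv2.2.2.2
      · -- backward arc
        obtain ⟨p, hv, hld⟩ := ihm (i+1) (some false) (by omega)
          (Or.inr ⟨false, rfl, Nat.succ_pos i, by simpa using harc⟩)
        have harc' : if (false : Bool) then A (f i) (f (i+1)) else A (f (i+1)) (f i) := by
          simpa using harc
        refine ⟨Wk.cons false harc' p, ⟨?_, hv⟩, hld⟩
        rcases hcomp with ⟨rfl, rfl⟩ | ⟨d₀, rfl, hi0, harc0⟩
        · trivial
        · cases d₀ with
          | true =>
            -- collider
            simp only [pass2]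
            apply hcol i hin.le
            exact ⟨hi0, hin, by simpa using harc0, harc⟩
          | false =>
            simp only [pass2]
            apply hnc i hin.le
            intro hv2
            exact acy_antisym hA (by simpa using harc0) hv2.2.2.1
  exact aux n 0 none (Nat.zero_add n) (Or.inl ⟨rfl, rfl⟩)


/-! ### Misc walk lemmas -/

lemma headd_app_cons {a b w2 v : V} (d : Bool) (hd : if d then A a b else A b a)
    (p : Wk A b w2) (q : Wk A w2 v) : headd ((Wk.cons d hd p).app q) = some d := rfl

lemma headd_nil_app {u v : V} (q : Wk A u v) : (Wk.nil u).app q = q := rfl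

lemma val2_changedin {Znc Zcol : Set V} {u w : V} {p : Wk A u w} {din : Option Bool}
    (hv : Val2 Znc Zcol p none)
    (hp : ∀ d', headd p = some d' → pass2 A Znc Zcol din u d') : Val2 Znc Zcol p din := by
  cases p with
  | nil => trivial
  | cons d hd p => exact ⟨hp d rfl, hv.2⟩

lemma pass2_nc {Znc Zcol : Set V} {din : Option Bool} {x : V} {d : Bool}
    (hnc : ncPass din d) (hp : pass2 A Znc Zcol din x d) : x ∉ Znc := by
  match din, d with
  | none, _ => exact absurd rfl hnc.1
  | some true, false => exact absurd ⟨rfl, rfl⟩ hnc.2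
  | some true, true => simpa [pass2] using hp
  | some false, true => simpa [pass2] using hp
  | some false, false => simpa [pass2] using hp

lemma evfree_changedin {Q : Option Bool → V → Bool → Prop} {u w : V} {p : Wk A u w}
    {din din' : Option Bool} (hf : EvFree Q p din)
    (h : ∀ d', headd p = some d' → ¬ Q din' u d') : EvFree Q p din' := by
  cases p with
  | nil => trivial
  | cons d hd p => exact ⟨h d rfl, hf.2⟩

def AllF : ∀ {u w : V}, Wk A u w → Prop
  | _, _, Wk.nil _ => True
  | _, _, Wk.cons d _ p => d = false ∧ AllF p

lemma allF_app : ∀ {u v w : V} (p : Wk A u v) (q : Wk A v w), AllF p → AllF q → AllF (p.app q) := by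
  intro u v w p
  induction p with
  | nil => intro q _ hq; exact hq
  | cons d hd p ih => intro q hp hq; exact ⟨hp.1, ih q hp.2 hq⟩

lemma allF_rev_of_allT : ∀ {u w : V} (p : Wk A u w), AllT p → AllF p.rev := by
  intro u w p
  induction p with
  | nil => intro _; trivial
  | cons d hd p ih =>
    rintro ⟨rfl, hT⟩
    exact allF_app _ _ (ih hT) ⟨rfl, trivial⟩

lemma rcount_allF {ZM : Set V} : ∀ {u w : V} (p : Wk A u w) (din : Option Bool),
    AllF p → din ≠ some true → Rcount A ZM p din = 0 := by
  intro u w p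
  induction p with
  | nil => intro _ _ _; rfl
  | cons d hd p ih =>
    rintro din ⟨rfl, hF⟩ hdin
    show _ + _ = 0
    rw [if_neg (by rintro ⟨h1, -, -⟩; exact hdin h1), ih _ hF (by simp)]

lemma lastd_some : ∀ {u w : V} (p : Wk A u w) (d : Bool), ∃ d', lastd p (some d) = some d' := by
  intro u w p
  induction p with
  | nil => intro d; exact ⟨d, rfl⟩
  | cons d₂ hd₂ p ih => intro d; exact ih d₂

lemma headd_app_ne {u v w : V} {p : Wk A u v} (q : Wk A v w) (h : headd p ≠ none) :
    headd (p.app q) = headd p := by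
  cases p with
  | nil => exact absurd rfl h
  | cons d hd p => rfl

lemma headd_rev : ∀ {u w : V} (p : Wk A u w), headd p.rev = flipo (lastd p none) := by
  intro u w p
  induction p with
  | nil => rfl
  | @cons a b w2 d hd p ih =>
    show headd (p.rev.app _) = flipo (lastd p (some d))
    cases p with
    | nil => rfl
    | cons d₂ hd₂ p₂ =>
      obtain ⟨d₃, hd3⟩ := lastd_some p₂ d₂
      have h2 : lastd (Wk.cons d₂ hd₂ p₂) none = some d₃ := hd3
      rw [headd_app_ne _ (by rw [ih, h2]; simp [flipo]), ih]
      rfl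

lemma rtg_to_walk {u y : V} (h : Relation.ReflTransGen A u y) :
    ∃ p : Wk A u y, AllT p ∧ (∀ z ∈ srcs p, Relation.ReflTransGen A u z) := by
  induction h using Relation.ReflTransGen.head_induction_on with
  | refl => exact ⟨Wk.nil y, trivial, fun z hz => absurd hz (Set.notMem_empty z)⟩
  | head hstep htail ih =>
    rename_i a c
    obtain ⟨p, hT, hs⟩ := ih
    have hstep' : if (true : Bool) then A a c else A c a := by simpa using hstep
    refine ⟨Wk.cons true hstep' p, ⟨rfl, hT⟩, ?_⟩
    intro z hz
    rcases hz with rfl | hz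
    · exact .refl
    · exact .head hstep (hs z hz)

/-- The key "descending run" lemma: following a walk arrived-by-head, we reach
either a vertex with a descendant in `Zcol`, or the end of the walk, by a directed path. -/
lemma descend {Znc Zcol : Set V} : ∀ {u w : V} (q : Wk A u w),
    Val2 Znc Zcol q (some true) →
    ∃ y, Relation.ReflTransGen A u y ∧ ((Cdsc A y ∩ Zcol).Nonempty ∨ y = w) := by
  intro u w q
  induction q with
  | nil => exact fun _ => ⟨_, .refl, Or.inr rfl⟩
  | @cons a b w2 d hd p ih =>
    intro hv
    cases d with
    | true =>
      obtain ⟨y, hy, hcase⟩ := ih hv.2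
      exact ⟨y, .head (by simpa using hd) hy, hcase⟩
    | false =>
      have hp : pass2 A Znc Zcol (some true) a false := hv.1
      simp only [pass2] at hp
      exact ⟨a, .refl, Or.inl hp⟩


/-! ### Main notions -/

section Main

variable {A : V → V → Prop}

/-- A ZM-active entry walk from `B` to `v`, arriving with direction `a`. -/
def Entry (A : V → V → Prop) (B ZM : Set V) (v : V) (a : Option Bool) : Prop :=
  ∃ (b : V) (p : Wk A b v), b ∈ B ∧ b ∉ ZM ∧ Val2 (A := A) ZM ZM p none ∧ lastd p none = a

/-- Pseudo-σ: a walk from `v` to `D` whose non-colliders avoid `ZM` and whose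
colliders have descendants in `ZN`; `r` counts the "R-colliders". -/
def PSig (A : V → V → Prop) (D ZM ZN : Set V) (v : V) (dq : Bool) (r : ℕ) : Prop :=
  ∃ (dd : V) (q : Wk A v dd), dd ∈ D ∧ dd ∉ ZM ∧
    Val2 (A := A) ZM ZN q none ∧ headd q = some dq ∧ Rcount A ZM q none = r

/-- A ZN-active B-side piece arriving at `v` (which is exempt) with direction `a`. -/
def BNp (A : V → V → Prop) (B ZN : Set V) (v : V) (a : Bool) : Prop :=
  ∃ (b : V) (p : Wk A b v), b ∈ B ∧ b ∉ ZN ∧ Val2 (A := A) ZN ZN p none ∧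
    lastd p none = some a

/-- Real σ: additionally its non-colliders avoid `N` and its endpoint is not in `N`. -/
def RSig (A : V → V → Prop) (D M E N : Set V) (v : V) (dq : Bool) : Prop :=
  ∃ (dd : V) (q : Wk A v dd), dd ∈ D ∧ dd ∉ M ∪ E ∧ dd ∉ N ∧
    Val2 (A := A) (M ∪ E ∪ N) (N ∪ E) q none ∧ headd q = some dq

variable {B D E M N : Set V}

lemma active_endpoints {Z : Set V} {n : ℕ} {f : ℕ → V} (h : ActiveTrail A Z n f) :
    f 0 ∉ Z ∧ f n ∉ Z :=
  ⟨h.2.1 0 (Nat.zero_le n) (fun hv => absurd hv.1 (lt_irrefl 0)),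
   h.2.1 n le_rfl (fun hv => absurd hv.2.1 (lt_irrefl n))⟩

lemma headd_of_ne {u w : V} (p : Wk A u w) (h : u ≠ w) : ∃ d, headd p = some d := by
  cases p with
  | nil => exact absurd rfl h
  | cons d hd p => exact ⟨d, rfl⟩

lemma d_not_in_M (hsep : DSep A M D (N ∪ E)) {dd : V} (h1 : dd ∈ D) (h2 : dd ∉ N ∪ E) :
    dd ∉ M := by
  intro hM
  refine hsep 0 (fun _ => dd) hM h1 ⟨?_, ?_, ?_⟩
  · intro i hi; exact absurd hi (Nat.not_lt_zero i)
  · intro i _ _; exact h2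
  · intro i hi hv; exact absurd hv.2.1 (Nat.not_lt_zero i)

lemma m_cleanup (hA : Acyclic A) (hsep : DSep A M D (N ∪ E)) {v dd : V} (q : Wk A v dd)
    (hq : Val2 (A := A) (N ∪ E) (N ∪ E) q none) (hdd : dd ∈ D) (hdd2 : dd ∉ N ∪ E) :
    Val2 (A := A) (N ∪ E ∪ M) (N ∪ E) q none := by
  rcases split_first (A := A) (fun din x d => ncPass din d ∧ x ∈ M) q none with
    hfree | ⟨x, y, d₂, h₂, p₁, p₃, hpeq, hf, hev⟩
  · exact val2_strengthen_nc q none hq hfree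
  · rw [hpeq] at hq
    obtain ⟨h1, h2⟩ := (val2_app p₁ _ none).mp hq
    have hx : x ∉ N ∪ E := pass2_nc hev.1 h2.1
    exact absurd (dsep_no_walk hA hsep hev.2 hx hdd hdd2 _ (val2_none _ _ h2)) not_false

lemma union_rot : (N : Set V) ∪ E ∪ M = M ∪ E ∪ N := by
  ext z; simp only [Set.mem_union]; tauto

lemma ZN_sub : (N : Set V) ∪ E ⊆ M ∪ E ∪ N := by
  rintro z (h | h)
  · exact Or.inr h
  · exact Or.inl (Or.inr h)

lemma ZM_sub : (M : Set V) ∪ E ⊆ M ∪ E ∪ N := Set.subset_union_left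

/-- The decomposition of a minimality witness at `v ∈ N`. -/
lemma F2 (hA : Acyclic A) (hN1 : DSep A B D (N ∪ E))
    (hmin : ∀ M' ⊂ N, ¬ DSep A B D (M' ∪ E)) (hsep : DSep A M D (N ∪ E))
    {v : V} (hvN : v ∈ N) (hvD : v ∉ D) :
    (v ∈ B ∨ ∃ a, BNp A B (N ∪ E) v a) ∧ ∃ dq, RSig A D M E N v dq := by
  have hsub : N \ {v} ⊂ N := by
    rw [Set.ssubset_def]
    exact ⟨Set.diff_subset, fun h => (h hvN).2 rfl⟩
  have hnd := hmin _ hsub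
  unfold DSep at hnd
  push_neg at hnd
  obtain ⟨n, f, hf0, hfn, hact⟩ := hnd
  obtain ⟨hb', hd'⟩ := active_endpoints hact
  obtain ⟨p, hpv, -⟩ := active_to_walk hA hact
  have hZ'v : (N \ {v} ∪ E) ∪ {v} = N ∪ E := by
    ext z
    simp only [Set.mem_union, Set.mem_diff, Set.mem_singleton_iff]
    constructor
    · rintro ((⟨h1, -⟩ | h1) | rfl)
      · exact Or.inl h1
      · exact Or.inr h1
      · exact Or.inl hvN
    · rintro (h1 | h1)
      · by_cases hz : z = v
        · exact Or.inr hz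
        · exact Or.inl (Or.inl ⟨h1, hz⟩)
      · exact Or.inl (Or.inr h1)
  have hddv : f n ≠ v := fun h => hvD (h ▸ hfn)
  have hddZN : f n ∉ N ∪ E := by
    intro h
    apply hd'
    rw [← hZ'v] at h
    rcases h with h | h
    · exact h
    · exact absurd h hddv
  have hddM : f n ∉ M := d_not_in_M hsep hfn hddZN
  have hddZM : f n ∉ M ∪ E := by
    rintro (h | h)
    · exact hddM h
    · exact hddZN (Or.inr h)
  have hddN : f n ∉ N := fun h => hddZN (Or.inl h)
  have hZ'sub : (N \ {v} ∪ E : Set V) ⊆ N ∪ E := by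
    rintro z (h | h)
    · exact Or.inl h.1
    · exact Or.inr h
  -- helper producing an RSig from a suitable walk from v
  have mkRSig : ∀ (q : Wk A v (f n)), Val2 (A := A) (N \ {v} ∪ E) (N \ {v} ∪ E) q none →
      EvFree (fun din x d => ncPass din d ∧ x ∈ ({v} : Set V)) q none →
      ∃ dq, RSig A D M E N v dq := by
    intro q hq hqf
    have hq1 : Val2 (A := A) ((N \ {v} ∪ E) ∪ {v}) (N \ {v} ∪ E) q none :=
      val2_strengthen_nc q none hq hqf
    rw [hZ'v] at hq1
    have hq2 : Val2 (A := A) (N ∪ E) (N ∪ E) q none :=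
      val2_mono (le_refl _) hZ'sub q none hq1
    have hq3 := m_cleanup hA hsep q hq2 hfn hddZN
    rw [union_rot] at hq3
    obtain ⟨dq, hdq⟩ := headd_of_ne q (fun h => hddv h.symm)
    exact ⟨dq, f n, q, hfn, hddZM, hddN, hq3, hdq⟩
  -- contradiction with hN1 when the walk avoids v entirely and b ≠ v
  have contraN1 : ∀ (hbv : f 0 ≠ v),
      EvFree (fun din x d => ncPass din d ∧ x ∈ ({v} : Set V)) p none → False := by
    intro hbv hfree
    have hp1 : Val2 (A := A) ((N \ {v} ∪ E) ∪ {v}) (N \ {v} ∪ E) p none :=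
      val2_strengthen_nc p none hpv hfree
    rw [hZ'v] at hp1
    have hp2 : Val2 (A := A) (N ∪ E) (N ∪ E) p none := val2_mono (le_refl _) hZ'sub p none hp1
    have hbZN : f 0 ∉ N ∪ E := by
      intro h
      apply hb'
      rw [← hZ'v] at h
      rcases h with h | h
      · exact h
      · exact absurd h hbv
    exact dsep_no_walk hA hN1 hf0 hbZN hfn hddZN p hp2
  constructor
  · -- BN side
    by_cases hbv : f 0 = v
    · exact Or.inl (hbv ▸ hf0)
    · rcases split_first (A := A) (fun din x d => ncPass din d ∧ x ∈ ({v} : Set V)) p none with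
        hfree | ⟨x, y, d₂, h₂, p₁, p₃, hpeq, hf1, hev⟩
      · exact absurd (contraN1 hbv hfree) not_false
      · have hxv : x = v := hev.2
        subst hxv
        have hpv2 := hpv
        rw [hpeq] at hpv2
        obtain ⟨h1, -⟩ := (val2_app p₁ _ none).mp hpv2
        have hp1 : Val2 (A := A) ((N \ {x} ∪ E) ∪ {x}) (N \ {x} ∪ E) p₁ none :=
          val2_strengthen_nc p₁ none h1 hf1
        rw [hZ'v] at hp1
        have hp2 : Val2 (A := A) (N ∪ E) (N ∪ E) p₁ none :=
          val2_mono (le_refl _) hZ'sub p₁ none hp1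
        have hbZN : f 0 ∉ N ∪ E := by
          intro h
          apply hb'
          rw [← hZ'v] at h
          rcases h with h | h
          · exact h
          · exact absurd h hbv
        obtain ⟨hne, -⟩ := hev.1
        rcases hld : lastd p₁ none with _ | a
        · exact absurd hld hne
        · exact Or.inr ⟨a, f 0, p₁, hf0, hbZN, hp2, hld⟩
  · -- σ side
    rcases split_last (A := A) (fun din x d => ncPass din d ∧ x ∈ ({v} : Set V)) p none with
      hfree | ⟨x, y, d₂, h₂, p₁, p₃, hpeq, hev, hf3⟩
    · by_cases hbv : f 0 = v
      · subst hbv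
        exact mkRSig p hpv hfree
      · exact absurd (contraN1 hbv hfree) not_false
    · have hxv : x = v := hev.2
      subst hxv
      rw [hpeq] at hpv
      obtain ⟨-, h2⟩ := (val2_app p₁ _ none).mp hpv
      refine mkRSig (Wk.cons d₂ h₂ p₃) (val2_none _ _ h2) ?_
      exact ⟨fun hc => hc.1.1 rfl, hf3⟩

lemma lastd_headd_none {u w : V} {p : Wk A u w} (h : headd p = none) (din : Option Bool) :
    lastd p din = din := by
  cases p with
  | nil => rfl
  | cons d hd p => exact absurd h (by simp [headd])

lemma lastd_indep {u w : V} {p : Wk A u w} (h : headd p ≠ none) (din din' : Option Bool) :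
    lastd p din = lastd p din' := by
  cases p with
  | nil => exact absurd rfl h
  | cons d hd p => rfl

/-- The bridge step: a compatible entry plus a pseudo-σ with `r ≥ 1` R-colliders produces a
deeper entry–pseudo-σ pair with strictly fewer R-colliders (and for `r = 0`, `False`). -/
lemma bridge (hA : Acyclic A) (hM : DSep A B D (M ∪ E))
    {v : V} {a : Option Bool} {dq : Bool} {r : ℕ}
    (hent : Entry A B (M ∪ E) v a) (hσ : PSig A D (M ∪ E) (N ∪ E) v dq r)
    (hcompat : pass2 A (M ∪ E) (M ∪ E) a v dq) :
    ∃ (t : V) (r' : ℕ), r' < r ∧ t ∈ N ∧ t ∉ M ∪ E ∧ t ∉ D ∧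
      Entry A B (M ∪ E) t (some true) ∧ PSig A D (M ∪ E) (N ∪ E) t false r' := by
  obtain ⟨b, pe, hbB, hbZM, hpev, hpelast⟩ := hent
  obtain ⟨dd, q, hddD, hddZM, hqv, hqhead, hqr⟩ := hσ
  rcases split_first (A := A) (RcolEv A (M ∪ E)) q none with
    hfree | ⟨c, y, d₂, h₂, p₁, p₃, hqeq, hf1, hev⟩
  · -- no R-collider at all: direct contradiction with hM
    exfalso
    have hq2 : Val2 (A := A) (M ∪ E) (M ∪ E) q none := val2_strengthen_col q none hqv hfree
    have hq3 : Val2 (A := A) (M ∪ E) (M ∪ E) q a := by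
      refine val2_changedin hq2 (fun d' hd' => ?_)
      rw [hqhead] at hd'
      injection hd' with h
      rw [h] at hcompat
      exact hcompat
    have hbig : Val2 (A := A) (M ∪ E) (M ∪ E) (pe.app q) none := by
      rw [val2_app]
      exact ⟨hpev, by rw [hpelast]; exact hq3⟩
    exact dsep_no_walk hA hM hbB hbZM hddD hddZM _ hbig
  · obtain ⟨hldt, hd₂f, hcR⟩ := hev
    subst hd₂f
    rw [hqeq] at hqv hqr hqhead
    obtain ⟨hv1, hv2⟩ := (val2_app p₁ _ none).mp hqv
    have hp₁ne : headd p₁ ≠ none := by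
      intro h
      rw [lastd_headd_none h none] at hldt
      exact absurd hldt (by simp)
    have hheq : headd p₁ = some dq := by
      rw [headd_app_ne _ hp₁ne] at hqhead
      exact hqhead
    have hp1M : Val2 (A := A) (M ∪ E) (M ∪ E) p₁ none := val2_strengthen_col p₁ none hv1 hf1
    have hp1Ma : Val2 (A := A) (M ∪ E) (M ∪ E) p₁ a := by
      refine val2_changedin hp1M (fun d' hd' => ?_)
      rw [hheq] at hd'
      injection hd' with h
      rw [h] at hcompat
      exact hcompat
    have hcpass : pass2 A (M ∪ E) (N ∪ E) (lastd p₁ none) c false := hv2.1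
    rw [hldt] at hcpass
    have hcwit : (Cdsc A c ∩ (N ∪ E)).Nonempty := by simpa [pass2] using hcpass
    obtain ⟨y₀, hy₀c, hy₀ZN⟩ := hcwit
    have hdesc_ZM : ∀ z, Relation.ReflTransGen A c z → z ∉ M ∪ E :=
      fun z hz hmem => hcR ⟨z, hz, hmem⟩
    have hy₀N : y₀ ∈ N := by
      rcases hy₀ZN with h | h
      · exact h
      · exact absurd (Or.inr h) (hdesc_ZM y₀ hy₀c)
    obtain ⟨t, htT, pd, hpdT, hpds, hpdrt⟩ := firsthit (N ∪ D) hy₀c (Or.inl hy₀N)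
    have htZM : t ∉ M ∪ E := hdesc_ZM t hpdrt
    have hpdsZM : ∀ z ∈ srcs pd, z ∉ M ∪ E := fun z hz => hdesc_ZM z (hpds z hz).2
    have hbigpre : Val2 (A := A) (M ∪ E) (M ∪ E) ((pe.app p₁).app pd) none := by
      rw [val2_app]
      refine ⟨?_, val2_allT pd hpdT hpdsZM _⟩
      rw [val2_app]
      exact ⟨hpev, by rw [hpelast]; exact hp1Ma⟩
    by_cases htD : t ∈ D
    · exact absurd (dsep_no_walk hA hM hbB hbZM htD htZM _ hbigpre) not_false
    · have htN : t ∈ N := htT.resolve_right htD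
      have hldp₁a : lastd p₁ (lastd pe none) = some true := by
        rw [lastd_indep hp₁ne _ none, hldt]
      have hlast2 : lastd ((pe.app p₁).app pd) none = some true := by
        rw [lastd_app, lastd_app, hldp₁a]
        cases hh : headd pd with
        | none => exact lastd_headd_none hh _
        | some dh =>
          cases pd with
          | nil => exact absurd hh (by simp [headd])
          | cons d3 hd3 p4 => exact lastd_allT_cons d3 hd3 p4 hpdT _
      refine ⟨t, Rcount A (M ∪ E) p₃ (some false), ?_, htN, htZM, htD, ?_, ?_⟩
      · -- r' < r
        rw [rcount_app, evfree_rcount_zero p₁ none hf1] at hqr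
        rw [hldt] at hqr
        have : Rcount A (M ∪ E) (Wk.cons false h₂ p₃) (some true) =
            1 + Rcount A (M ∪ E) p₃ (some false) := by
          show (if _ then 1 else 0) + _ = _
          rw [if_pos ⟨rfl, rfl, hcR⟩]
        omega
      · exact ⟨b, (pe.app p₁).app pd, hbB, hbZM, hbigpre, hlast2⟩
      · -- the new pseudo-σ
        refine ⟨dd, pd.rev.app (Wk.cons false h₂ p₃), hddD, hddZM, ?_, ?_, ?_⟩
        · rw [val2_app]
          refine ⟨val2_rev _ _ (val2_allT pd hpdT hpdsZM none), ?_⟩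
          refine ⟨?_, hv2.2⟩
          rw [lastd_rev]
          cases hh : headd pd with
          | none => trivial
          | some dh =>
            cases pd with
            | nil => exact absurd hh (by simp [headd])
            | cons d3 hd3 p4 =>
              have hd3t : d3 = true := hpdT.1
              have : dh = d3 := by
                rw [show headd (Wk.cons d3 hd3 p4) = some d3 from rfl] at hh
                injection hh with h
                exact h.symm
              subst this
              subst hd3t
              show pass2 A (M ∪ E) (N ∪ E) (some false) c false
              simp only [pass2]
              exact hdesc_ZM c .refl
        · -- headd
          cases pd with
          | nil => rfl
          | cons d3 hd3 p4 =>
            rw [headd_app_ne]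
            · rw [headd_rev]
              rw [lastd_allT_cons d3 hd3 p4 hpdT none]
              rfl
            · rw [headd_rev, lastd_allT_cons d3 hd3 p4 hpdT none]
              simp [flipo]
        · -- Rcount
          rw [rcount_app, rcount_allF pd.rev none (allF_rev_of_allT pd hpdT) (by simp)]
          rw [lastd_rev]
          have hnotev : ∀ din', din' ≠ some true →
              Rcount A (M ∪ E) (Wk.cons false h₂ p₃) din' =
                Rcount A (M ∪ E) p₃ (some false) := by
            intro din' hdin'
            show (if _ then 1 else 0) + _ = _
            rw [if_neg (by rintro ⟨h1, -, -⟩; exact hdin' h1)]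
            omega
          cases hh : headd pd with
          | none =>
            rw [show flipo (none : Option Bool) = none from rfl, hnotev none (by simp)]
            omega
          | some dh =>
            cases pd with
            | nil => exact absurd hh (by simp [headd])
            | cons d3 hd3 p4 =>
              have hd3t : d3 = true := hpdT.1
              subst hd3t
              rw [show headd (Wk.cons true hd3 p4) = some true from rfl] at hh
              injection hh with h
              subst h
              rw [show flipo (some true) = some false from rfl, hnotev (some false) (by simp)]
              omega

/-- The clean-descent step: in the "incompatible" situation, a directed path from `v`
to `N ∪ D` yields a strictly lower vertex carrying both an entry and a pseudo-σ with the
same `r` (or an outright contradiction when the path reaches `D`). -/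
lemma clean_core (hA : Acyclic A) (hM : DSep A B D (M ∪ E))
    {v : V} {a : Option Bool} {r : ℕ} (hvZM : v ∉ M ∪ E)
    (hR : ¬ (Cdsc A v ∩ (M ∪ E)).Nonempty)
    (hent : Entry A B (M ∪ E) v a) (hσ : PSig A D (M ∪ E) (N ∪ E) v false r)
    {w₀ y : V} (harc : A v w₀) (hrtg : Relation.ReflTransGen A w₀ y) (hyT : y ∈ N ∪ D) :
    ∃ th, Relation.TransGen A v th ∧ th ∈ N ∧ th ∉ M ∪ E ∧ th ∉ D ∧
      Entry A B (M ∪ E) th (some true) ∧ PSig A D (M ∪ E) (N ∪ E) th false r := by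
  obtain ⟨t, htT, pd, hpdT, hpds, hpdrt⟩ := firsthit (N ∪ D) hrtg hyT
  have harc' : if (true : Bool) then A v w₀ else A w₀ v := by simpa using harc
  have hdescZM : ∀ z, Relation.ReflTransGen A v z → z ∉ M ∪ E :=
    fun z hz hm => hR ⟨z, hz, hm⟩
  set pd' : Wk A v t := Wk.cons true harc' pd with hpd'
  have hpd'T : AllT pd' := ⟨rfl, hpdT⟩
  have hpd's : ∀ z ∈ srcs pd', z ∉ M ∪ E := by
    intro z hz
    rcases hz with rfl | hz
    · exact hvZM
    · exact hdescZM z (.head harc (hpds z hz).2)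
  have htZM : t ∉ M ∪ E := hdescZM t (.head harc hpdrt)
  have hTG : Relation.TransGen A v t := Relation.TransGen.head' harc hpdrt
  obtain ⟨b, pe, hbB, hbZM, hpev, hpelast⟩ := hent
  have hbig : Val2 (A := A) (M ∪ E) (M ∪ E) (pe.app pd') none := by
    rw [val2_app]
    exact ⟨hpev, val2_allT pd' hpd'T hpd's _⟩
  by_cases htD : t ∈ D
  · exact absurd (dsep_no_walk hA hM hbB hbZM htD htZM _ hbig) not_false
  · have htN : t ∈ N := htT.resolve_right htD
    obtain ⟨dd, qσ, hddD, hddZM, hqv, hqhead, hqr⟩ := hσ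
    have hlast2 : lastd (pe.app pd') none = some true := by
      rw [lastd_app]
      exact lastd_allT_cons true harc' pd hpd'T _
    have hrevlast : lastd pd'.rev none = some false := by
      rw [lastd_rev]
      rfl
    have hrevhead : headd pd'.rev = some false := by
      rw [headd_rev, lastd_allT_cons true harc' pd hpd'T none]
      rfl
    refine ⟨t, hTG, htN, htZM, htD, ⟨b, pe.app pd', hbB, hbZM, hbig, hlast2⟩,
      dd, pd'.rev.app qσ, hddD, hddZM, ?_, ?_, ?_⟩
    · rw [val2_app]
      refine ⟨val2_rev _ _ (val2_allT pd' hpd'T hpd's none), ?_⟩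
      rw [hrevlast]
      refine val2_changedin hqv (fun d' hd' => ?_)
      rw [hqhead] at hd'
      injection hd' with h
      subst h
      simp only [pass2]
      exact hvZM
    · rw [headd_app_ne _ (by rw [hrevhead]; simp)]
      exact hrevhead
    · rw [rcount_app, rcount_allF pd'.rev none (allF_rev_of_allT pd' hpd'T) (by simp),
        hrevlast, rcount_not_some_true qσ (by simp)]
      omega

open Classical in
noncomputable def sdc (A : V → V → Prop) [Fintype V] (v : V) : ℕ :=
  (Finset.univ.filter (fun w => Relation.TransGen A v w)).card

lemma sdc_lt [Fintype V] (hA : Acyclic A) {v t : V} (h : Relation.TransGen A v t) :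
    sdc A t < sdc A v := by
  classical
  apply Finset.card_lt_card
  rw [Finset.ssubset_iff_of_subset]
  · refine ⟨t, ?_, ?_⟩
    · simp only [Finset.mem_filter, Finset.mem_univ, true_and]
      exact h
    · simp only [Finset.mem_filter, Finset.mem_univ, true_and]
      exact hA t
  · intro z hz
    simp only [Finset.mem_filter, Finset.mem_univ, true_and] at hz ⊢
    exact h.trans hz

/-- The main induction. -/
lemma core [Fintype V] (hA : Acyclic A) (hM : DSep A B D (M ∪ E)) (hN1 : DSep A B D (N ∪ E))
    (hmin : ∀ M' ⊂ N, ¬ DSep A B D (M' ∪ E)) (hsep : DSep A M D (N ∪ E)) :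
    ∀ (r : ℕ) (v : V), v ∈ N → v ∉ M ∪ E → v ∉ D →
      (∃ a, Entry A B (M ∪ E) v a) → (∃ dq, PSig A D (M ∪ E) (N ∪ E) v dq r) → False := by
  intro r
  induction r using Nat.strong_induction_on with
  | _ r IHr =>
  suffices h : ∀ (k : ℕ) (v : V), sdc A v ≤ k → v ∈ N → v ∉ M ∪ E → v ∉ D →
      (∃ a, Entry A B (M ∪ E) v a) → (∃ dq, PSig A D (M ∪ E) (N ∪ E) v dq r) → False by
    intro v h1 h2 h3 h4 h5
    exact h (sdc A v) v le_rfl h1 h2 h3 h4 h5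
  intro k
  induction k using Nat.strong_induction_on with
  | _ k IHk =>
  intro v hk hvN hvZM hvD hentE hσE
  obtain ⟨a, hent⟩ := hentE
  obtain ⟨dq, hσ⟩ := hσE
  by_cases hcomp : pass2 A (M ∪ E) (M ∪ E) a v dq
  · obtain ⟨t, r', hlt, htN, htZM, htD, hentt, hσt⟩ := bridge hA hM hent hσ hcomp
    exact IHr r' hlt t htN htZM htD ⟨_, hentt⟩ ⟨_, hσt⟩
  · -- incompatible: a = some true, dq = false, Cdsc v ∩ ZM = ∅
    have hinc : a = some true ∧ dq = false ∧ ¬ (Cdsc A v ∩ (M ∪ E)).Nonempty := by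
      cases a with
      | none => exact absurd trivial hcomp
      | some a' =>
        cases a' with
        | false =>
          exfalso
          apply hcomp
          cases dq <;> · simp only [pass2]; exact hvZM
        | true =>
          cases dq with
          | true =>
            exfalso
            apply hcomp
            simp only [pass2]
            exact hvZM
          | false =>
            refine ⟨rfl, rfl, fun hne => hcomp ?_⟩
            simp only [pass2]
            exact hne
    obtain ⟨ha, hdq, hR⟩ := hinc
    subst ha
    subst hdq
    have runBridge : ∀ a', Entry A B (M ∪ E) v a' →
        pass2 A (M ∪ E) (M ∪ E) a' v false → False := by
      intro a' hent' hcomp'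
      obtain ⟨t, r', hlt, htN, htZM, htD, hentt, hσt⟩ := bridge hA hM hent' hσ hcomp'
      exact IHr r' hlt t htN htZM htD ⟨_, hentt⟩ ⟨_, hσt⟩
    have runClean : ∀ w₀ y, A v w₀ → Relation.ReflTransGen A w₀ y → y ∈ N ∪ D → False := by
      intro w₀ y harc hrtg hyT
      obtain ⟨th, hTG, htN, htZM, htD, hentt, hσt⟩ :=
        clean_core hA hM hvZM hR hent hσ harc hrtg hyT
      exact IHk (sdc A th) (lt_of_lt_of_le (sdc_lt hA hTG) hk) th le_rfl htN htZM htD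
        ⟨_, hentt⟩ ⟨_, hσt⟩
    obtain ⟨hBN, dq₁, hRS⟩ := F2 hA hN1 hmin hsep hvN hvD
    rcases hBN with hvB | ⟨a₁, hBN⟩
    · exact runBridge none ⟨v, Wk.nil v, hvB, hvZM, trivial, rfl⟩ trivial
    · cases a₁ with
      | true =>
        obtain ⟨dd₁, qR, hd₁D, hd₁ZM, hd₁N, hqRv, hqRhead⟩ := hRS
        cases dq₁ with
        | false =>
          -- J2 contradiction with hN1
          obtain ⟨b₁, pB, hb₁B, hb₁ZN, hpBv, hpBlast⟩ := hBN
          have hqR2 : Val2 (A := A) (N ∪ E) (N ∪ E) qR none :=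
            val2_mono ZN_sub (le_refl _) qR none hqRv
          have hqR3 : Val2 (A := A) (N ∪ E) (N ∪ E) qR (some true) := by
            refine val2_changedin hqR2 (fun d' hd' => ?_)
            rw [hqRhead] at hd'
            injection hd' with h
            subst h
            simp only [pass2]
            exact ⟨v, Relation.ReflTransGen.refl, Or.inl hvN⟩
          have hbig : Val2 (A := A) (N ∪ E) (N ∪ E) (pB.app qR) none := by
            rw [val2_app]
            exact ⟨hpBv, by rw [hpBlast]; exact hqR3⟩
          have hd₁ZN : dd₁ ∉ N ∪ E := by
            rintro (h | h)
            · exact hd₁N h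
            · exact hd₁ZM (Or.inr h)
          exact dsep_no_walk hA hN1 hb₁B hb₁ZN hd₁D hd₁ZN _ hbig
        | true =>
          -- descending analysis on the fresh σ
          cases qR with
          | nil => exact absurd hqRhead (by simp [headd])
          | @cons _ w0 _ d3 hd3 p4 =>
            have hd3t : d3 = true := by
              injection hqRhead
            subst hd3t
            have harc : A v w0 := by simpa using hd3
            obtain ⟨y, hy, hcase⟩ := descend p4 hqRv.2
            rcases hcase with hwit | rfl
            · obtain ⟨y₂, hy₂, hy₂ZN⟩ := hwit
              have hy₂' := hy.trans hy₂
              have hy₂N : y₂ ∈ N := by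
                rcases hy₂ZN with h | h
                · exact h
                · exact absurd ⟨y₂, .head harc hy₂', Or.inr h⟩ hR
              exact runClean _ y₂ harc hy₂' (Or.inl hy₂N)
            · exact runClean _ y harc hy (Or.inr hd₁D)
      | false =>
        -- BN_t: reverse the B-side piece and descend
        obtain ⟨b₁, pB, hb₁B, hb₁ZN, hpBv, hpBlast⟩ := hBN
        have hprevv : Val2 (A := A) (N ∪ E) (N ∪ E) pB.rev none := val2_rev _ _ hpBv
        have hprevh : headd pB.rev = some true := by
          rw [headd_rev, hpBlast]
          rfl
        cases hpe : pB.rev with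
        | nil =>
          rw [hpe] at hprevh
          exact absurd hprevh (by simp [headd])
        | @cons _ w0 _ d3 hd3 p4 =>
          rw [hpe] at hprevv hprevh
          have hd3t : d3 = true := by
            injection hprevh
          subst hd3t
          have harc : A v w0 := by simpa using hd3
          obtain ⟨y, hy, hcase⟩ := descend p4 hprevv.2
          rcases hcase with hwit | rfl
          · obtain ⟨y₂, hy₂, hy₂ZN⟩ := hwit
            have hy₂' := hy.trans hy₂
            have hy₂N : y₂ ∈ N := by
              rcases hy₂ZN with h | h
              · exact h
              · exact absurd ⟨y₂, .head harc hy₂', Or.inr h⟩ hR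
            exact runClean _ y₂ harc hy₂' (Or.inl hy₂N)
          · -- reached b₁
            by_cases hbT : y ∈ N ∪ D
            · exact runClean _ y harc hy hbT
            · -- build the reversed-descent entry with arrival 't'
              obtain ⟨pw, hpwT, hpws⟩ := rtg_to_walk hy
              have harc' : if (true : Bool) then A v w0 else A w0 v := by simpa using harc
              set pf := Wk.cons true harc' pw with hpf
              have hpfT : AllT pf := ⟨rfl, hpwT⟩
              have hdescZM : ∀ z, Relation.ReflTransGen A v z → z ∉ M ∪ E :=
                fun z hz hm => hR ⟨z, hz, hm⟩
              have hpfs : ∀ z ∈ srcs pf, z ∉ M ∪ E := by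
                intro z hz
                rcases hz with rfl | hz
                · exact hvZM
                · exact hdescZM z (.head harc (hpws z hz))
              have hb₁ZM : y ∉ M ∪ E := hdescZM y (.head harc hy)
              have hlastpf : lastd pf.rev none = some false := by
                rw [lastd_rev]
                rfl
              exact runBridge (some false)
                ⟨y, pf.rev, hb₁B, hb₁ZM, val2_rev _ _ (val2_allT pf hpfT hpfs none), hlastpf⟩
                (by simp only [pass2]; exact hvZM)

end Main
end S19

theorem stmt_19 {V : Type*} [Fintype V] (A : V → V → Prop) (hA : Acyclic A)
    (B D E M N : Set V) (hM : IsDSep A B D E M) (hN : IsMinDSep A B D E N)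
    (h : DSep A M D (N ∪ E)) :
    DSep A B N (M ∪ E) := by
  intro n f hfB hfN hact
  obtain ⟨hb0, hxZM⟩ := S19.active_endpoints hact
  have hM' : DSep A B D (M ∪ E) := hM
  have hN1 : DSep A B D (N ∪ E) := hN.1
  have hmin : ∀ M' ⊂ N, ¬ DSep A B D (M' ∪ E) := fun M' hsub => hN.2 M' hsub
  by_cases hxD : f n ∈ D
  · exact hM' n f hfB hxD hact
  · obtain ⟨p, hpv, -⟩ := S19.active_to_walk hA hact
    have hent : S19.Entry A B (M ∪ E) (f n) (S19.lastd p none) := ⟨f 0, p, hfB, hb0, hpv, rfl⟩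
    obtain ⟨-, dq₁, hRS⟩ := S19.F2 hA hN1 hmin h hfN hxD
    obtain ⟨dd, q, h1, h2, h3, hv, hh⟩ := hRS
    have hps : S19.PSig A D (M ∪ E) (N ∪ E) (f n) dq₁ (S19.Rcount A (M ∪ E) q none) :=
      ⟨dd, q, h1, h2, S19.val2_mono S19.ZM_sub (le_refl _) q none hv, hh, rfl⟩
    exact S19.core hA hM' hN1 hmin h _ (f n) hfN hxZM hxD ⟨_, hent⟩ ⟨_, hps⟩
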